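/- arXiv:1711.02974 — 4 statements merged into one kernel-verified Lean document; each statement's English description precedes it below -/
import Mathlib

section
/- Let w ∈ ℝ^n with ‖w‖₁ > η > 0, and let v be the Euclidean projection of (|w₁|,…,|wₙ|) onto the simplex Δ_η = {u ∈ ℝ^n : u_i ≥ 0 for all i, ∑_i u_i = η}. Then the point (sign(w₁)v₁, …, sign(wₙ)vₙ) is the Euclidean projection of w onto the closed ℓ¹ ball of radius η. -/
/-- `p` is the Euclidean projection of `x` onto `C`: it belongs to `C` and
minimizes the Euclidean distance to `x` among points of `C`. -/
def IsProjOn {n : ℕ} (C : Set (EuclideanSpace ℝ (Fin n)))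
    (x p : EuclideanSpace ℝ (Fin n)) : Prop :=
  p ∈ C ∧ ∀ q ∈ C, ‖x - p‖ ≤ ‖x - q‖

lemma normsub {n : ℕ} (x y : EuclideanSpace ℝ (Fin n)) :
    ‖x - y‖ = Real.sqrt (∑ i, (x i - y i) ^ 2) := by
  rw [EuclideanSpace.norm_eq]
  congr 1
  refine Finset.sum_congr rfl fun i _ => ?_
  have : (x - y) i = x i - y i := rfl
  rw [this, Real.norm_eq_abs, sq_abs]

/-- If `‖w‖₁ > η > 0` and `v` is the Euclidean projection of `(|w₁|,…,|wₙ|)` onto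
the simplex `Δ_η`, then `(sign(w₁)v₁,…,sign(wₙ)vₙ)` is the Euclidean projection of
`w` onto the closed `ℓ¹` ball of radius `η`. -/
theorem stmt7 (n : ℕ) (η : ℝ) (hη : 0 < η)
    (w v : EuclideanSpace ℝ (Fin n)) (hw : η < ∑ i, |w i|)
    (hv : IsProjOn {u | (∀ i, 0 ≤ u i) ∧ ∑ i, u i = η}
      ((WithLp.equiv 2 (Fin n → ℝ)).symm fun i => |w i|) v) :
    IsProjOn {u : EuclideanSpace ℝ (Fin n) | ∑ i, |u i| ≤ η} w
      ((WithLp.equiv 2 (Fin n → ℝ)).symm fun i => Real.sign (w i) * v i) := by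
  obtain ⟨⟨hv0, hvsum⟩, hvmin⟩ := hv
  constructor
  · -- membership
    show ∑ i, |((WithLp.equiv 2 (Fin n → ℝ)).symm fun i => Real.sign (w i) * v i) i| ≤ η
    calc ∑ i, |((WithLp.equiv 2 (Fin n → ℝ)).symm fun i => Real.sign (w i) * v i) i|
        ≤ ∑ i, v i := by
          refine Finset.sum_le_sum fun i _ => ?_
          rw [WithLp.equiv_symm_apply, PiLp.toLp_apply, abs_mul]
          have h1 : |Real.sign (w i)| ≤ 1 := by
            rcases lt_trichotomy (w i) 0 with h | h | h
            · rw [Real.sign_of_neg h]; norm_num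
            · rw [h, Real.sign_zero]; norm_num
            · rw [Real.sign_of_pos h]; norm_num
          calc |Real.sign (w i)| * |v i| ≤ 1 * |v i| :=
                mul_le_mul_of_nonneg_right h1 (abs_nonneg _)
            _ = v i := by rw [one_mul, abs_of_nonneg (hv0 i)]
      _ = η := hvsum
  · intro q hq
    set S : ℝ := ∑ i, |q i| with hSdef
    have hSη : S ≤ η := hq
    set A : ℝ := ∑ i, |w i| with hAdef
    have hAS : 0 < A - S := by simp only [hAdef, hSdef]; linarith
    set t : ℝ := (η - S) / (A - S) with htdef
    have ht0 : 0 ≤ t := div_nonneg (by linarith) hAS.le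
    have ht1 : t ≤ 1 := (div_le_one hAS).mpr (by linarith)
    set r' : EuclideanSpace ℝ (Fin n) :=
      (WithLp.equiv 2 (Fin n → ℝ)).symm (fun i => |q i| + t * (|w i| - |q i|)) with hr'def
    have hr'app : ∀ i, r' i = |q i| + t * (|w i| - |q i|) := fun i => rfl
    have hr'mem : r' ∈ {u : EuclideanSpace ℝ (Fin n) | (∀ i, 0 ≤ u i) ∧ ∑ i, u i = η} := by
      constructor
      · intro i
        rw [hr'app]
        nlinarith [abs_nonneg (q i), abs_nonneg (w i)]
      · have : ∑ i, r' i = S + t * (A - S) := by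
          simp only [hr'app, Finset.sum_add_distrib, ← Finset.mul_sum,
            Finset.sum_sub_distrib, hSdef, hAdef]
        rw [this, htdef, div_mul_cancel₀ _ hAS.ne']
        ring
    have key := hvmin r' hr'mem
    rw [normsub, normsub] at key
    simp only [WithLp.equiv_symm_apply, PiLp.toLp_apply, hr'app] at key
    rw [normsub, normsub]
    have L1 : ∑ i, (w i - ((WithLp.equiv 2 (Fin n → ℝ)).symm
        fun i => Real.sign (w i) * v i) i) ^ 2 ≤ ∑ i, (|w i| - v i) ^ 2 := by
      refine Finset.sum_le_sum fun i _ => ?_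
      simp only [WithLp.equiv_symm_apply, PiLp.toLp_apply, WithLp.ofLp_toLp]
      rcases lt_trichotomy (w i) 0 with h | h | h
      · rw [Real.sign_of_neg h, abs_of_neg h]; ring_nf; exact le_rfl
      · rw [h, Real.sign_zero, abs_zero]
        simpa using sq_nonneg (v i)
      · rw [Real.sign_of_pos h, abs_of_pos h]; ring_nf; exact le_rfl
    have L2 : ∑ i, (|w i| - (|q i| + t * (|w i| - |q i|))) ^ 2
        ≤ ∑ i, (|w i| - |q i|) ^ 2 := by
      refine Finset.sum_le_sum fun i _ => ?_
      have : |w i| - (|q i| + t * (|w i| - |q i|)) = (1 - t) * (|w i| - |q i|) := by ring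
      rw [this]
      have h2t : (0:ℝ) ≤ 2 - t := by linarith
      nlinarith [mul_nonneg (mul_nonneg ht0 h2t) (sq_nonneg (|w i| - |q i|))]
    have L3 : ∑ i, (|w i| - |q i|) ^ 2 ≤ ∑ i, (w i - q i) ^ 2 := by
      refine Finset.sum_le_sum fun i _ => ?_
      nlinarith [le_abs_self (w i * q i), abs_mul (w i) (q i), sq_abs (w i), sq_abs (q i)]
    calc Real.sqrt (∑ i, (w i - ((WithLp.equiv 2 (Fin n → ℝ)).symm
          fun i => Real.sign (w i) * v i) i) ^ 2)
        ≤ Real.sqrt (∑ i, (|w i| - v i) ^ 2) := Real.sqrt_le_sqrt L1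
      _ ≤ Real.sqrt (∑ i, (|w i| - (|q i| + t * (|w i| - |q i|))) ^ 2) := key
      _ ≤ Real.sqrt (∑ i, (|w i| - |q i|) ^ 2) := Real.sqrt_le_sqrt L2
      _ ≤ Real.sqrt (∑ i, (w i - q i) ^ 2) := Real.sqrt_le_sqrt L3
end

section
/- The Euclidean projection of a point x onto the simplex Δ_η = {u ∈ ℝ^n : u_i ≥ 0, ∑ u_i = η} has the form v_i = max(x_i − τ, 0) for a unique real number τ satisfying ∑_i max(x_i − τ, 0) = η. -/
open scoped RealInnerProductSpace

theorem simplex_proj_unique_tau (n : ℕ) (η : ℝ) (hη : 0 < η) (hn : 0 < n)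
    (x : EuclideanSpace ℝ (Fin n)) :
    ∀ τ₁ τ₂ : ℝ, (∑ i, max (x i - τ₁) 0 = η) → (∑ i, max (x i - τ₂) 0 = η) → τ₁ = τ₂ := by
  have key : ∀ τ₁ τ₂ : ℝ, τ₁ < τ₂ → (∑ i, max (x i - τ₁) 0 = η) →
      (∑ i, max (x i - τ₂) 0 = η) → False := by
    intro τ₁ τ₂ hlt h1 h2
    have hex : ∃ i : Fin n, 0 < max (x i - τ₂) 0 := by
      by_contra h
      push_neg at h
      have : ∑ i, max (x i - τ₂) 0 ≤ 0 := Finset.sum_nonpos (fun i _ => h i)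
      linarith
    obtain ⟨i, hi⟩ := hex
    have hxi : τ₂ < x i := by
      rcases le_or_gt (x i) τ₂ with h | h
      · simp [max_eq_right (by linarith : x i - τ₂ ≤ 0)] at hi
      · exact h
    have : ∑ j, max (x j - τ₂) 0 < ∑ j, max (x j - τ₁) 0 := by
      apply Finset.sum_lt_sum
      · intro j _
        exact max_le_max (by linarith) le_rfl
      · refine ⟨i, Finset.mem_univ i, ?_⟩
        rw [max_eq_left (by linarith : (0:ℝ) ≤ x i - τ₂),
            max_eq_left (by linarith : (0:ℝ) ≤ x i - τ₁)]
        linarith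
    linarith
  intro τ₁ τ₂ h1 h2
  rcases lt_trichotomy τ₁ τ₂ with h | h | h
  · exact absurd (key τ₁ τ₂ h h1 h2) (by simp)
  · exact h
  · exact absurd (key τ₂ τ₁ h h2 h1) (by simp)

theorem simplex_proj_exists_tau (n : ℕ) (η : ℝ) (hη : 0 < η) (hn : 0 < n)
    (x : EuclideanSpace ℝ (Fin n)) :
    ∃ τ : ℝ, ∑ i, max (x i - τ) 0 = η := by
  have hne : (Finset.univ : Finset (Fin n)).Nonempty := ⟨⟨0, hn⟩, Finset.mem_univ _⟩
  set m := Finset.univ.inf' hne x with hm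
  set M := Finset.univ.sup' hne x with hM
  have hmM : m ≤ M := le_trans (Finset.inf'_le _ (Finset.mem_univ (⟨0, hn⟩ : Fin n)))
    (Finset.le_sup' _ (Finset.mem_univ (⟨0, hn⟩ : Fin n)))
  have hcont : Continuous fun τ : ℝ => ∑ i, max (x i - τ) 0 := by
    apply continuous_finset_sum
    intro i _
    exact (continuous_const.sub continuous_id).max continuous_const
  have ha : η ≤ ∑ i, max (x i - (m - η)) 0 := by
    have hsingle : max (x ⟨0, hn⟩ - (m - η)) 0 ≤ ∑ i, max (x i - (m - η)) 0 :=
      Finset.single_le_sum (f := fun i : Fin n => max (x i - (m - η)) 0)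
        (fun i _ => le_max_right _ _) (Finset.mem_univ _)
    have hmle : m ≤ x ⟨0, hn⟩ := Finset.inf'_le _ (Finset.mem_univ _)
    have : η ≤ max (x ⟨0, hn⟩ - (m - η)) 0 := le_max_of_le_left (by linarith)
    linarith
  have hb : ∑ i, max (x i - M) 0 = 0 := by
    apply Finset.sum_eq_zero
    intro i _
    have : x i ≤ M := Finset.le_sup' _ (Finset.mem_univ _)
    simp [max_eq_right (by linarith : x i - M ≤ 0)]
  have hab : m - η ≤ M := by linarith
  have := intermediate_value_Icc' hab hcont.continuousOn
  have hmem : η ∈ Set.Icc ((fun τ : ℝ => ∑ i, max (x i - τ) 0) M)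
      ((fun τ : ℝ => ∑ i, max (x i - τ) 0) (m - η)) := by
    simp only [hb]
    exact ⟨le_of_lt hη, ha⟩
  obtain ⟨τ, _, hτ⟩ := this hmem
  exact ⟨τ, hτ⟩

/-- The Euclidean projection `v` of `x` onto the simplex `Δ_η` has the form
`v i = max (x i - τ) 0` for the unique real `τ` with `∑ i, max (x i - τ) 0 = η`. -/
theorem stmt8 (n : ℕ) (η : ℝ) (hη : 0 < η)
    (x v : EuclideanSpace ℝ (Fin n))
    (hv : IsProjOn {u | (∀ i, 0 ≤ u i) ∧ ∑ i, u i = η} x v) :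
    (∃! τ : ℝ, ∑ i, max (x i - τ) 0 = η) ∧
      ∃ τ : ℝ, (∑ i, max (x i - τ) 0 = η) ∧ ∀ i, v i = max (x i - τ) 0 := by
  obtain ⟨⟨hv0, hvs⟩, hvmin⟩ := hv
  have hn : 0 < n := by
    by_contra h
    push_neg at h
    interval_cases n
    simp at hvs
    linarith
  obtain ⟨τ, hτ⟩ := simplex_proj_exists_tau n η hη hn x
  have huniq := simplex_proj_unique_tau n η hη hn x
  refine ⟨⟨τ, hτ, fun τ' h' => huniq τ' τ h' hτ⟩, τ, hτ, ?_⟩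
  -- define w
  set w : EuclideanSpace ℝ (Fin n) := WithLp.toLp 2 (fun i => max (x i - τ) 0) with hw
  have hwmem : (∀ i, 0 ≤ w i) ∧ ∑ i, w i = η := ⟨fun i => le_max_right _ _, hτ⟩
  -- key inner product inequality
  have hkey : ∀ q : EuclideanSpace ℝ (Fin n), (∀ i, 0 ≤ q i) → (∑ i, q i = η) →
      0 ≤ ⟪x - w, w - q⟫ := by
    intro q hq0 hqs
    have hinner : ⟪x - w, w - q⟫ = ∑ i, (x i - w i) * (w i - q i) := by
      rw [PiLp.inner_apply]
      congr 1
      funext i; simp [mul_comm]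
    rw [hinner]
    have hterm : ∀ i, τ * (w i - q i) ≤ (x i - w i) * (w i - q i) := by
      intro i
      rcases le_or_gt τ (x i) with h | h
      · have : w i = x i - τ := max_eq_left (by linarith)
        rw [this]; ring_nf; rfl
      · have hwi : w i = 0 := max_eq_right (by linarith)
        rw [hwi]
        have := hq0 i
        nlinarith
    calc (0:ℝ) = τ * (∑ i, w i - ∑ i, q i) := by rw [hwmem.2, hqs]; ring
      _ = ∑ i, τ * (w i - q i) := by rw [← Finset.sum_sub_distrib, Finset.mul_sum]
      _ ≤ ∑ i, (x i - w i) * (w i - q i) := Finset.sum_le_sum (fun i _ => hterm i)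
  -- w is a projection; combined with v projection, get v = w
  have hvx : ‖x - v‖ ≤ ‖x - w‖ := hvmin w hwmem
  have hsq : ‖x - v‖ ^ 2 = ‖x - w‖ ^ 2 + 2 * ⟪x - w, w - v⟫ + ‖w - v‖ ^ 2 := by
    have : x - v = (x - w) + (w - v) := by abel
    rw [this, norm_add_sq_real]
  have hinn : 0 ≤ ⟪x - w, w - v⟫ := hkey v hv0 hvs
  have hsq2 : ‖x - v‖ ^ 2 ≤ ‖x - w‖ ^ 2 := by
    have h1 : (0:ℝ) ≤ ‖x - v‖ := norm_nonneg _
    nlinarith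
  have hwv : ‖w - v‖ ^ 2 ≤ 0 := by nlinarith
  have : w - v = 0 := by
    have : ‖w - v‖ = 0 := by nlinarith [norm_nonneg (w - v), sq_nonneg ‖w - v‖]
    exact norm_eq_zero.mp this
  have hveq : v = w := by
    have := sub_eq_zero.mp this
    exact this.symm
  intro i
  rw [hveq]
end

section
/- Let φ : ℝ^n → ℝ be convex and differentiable with β-Lipschitz gradient, C nonempty closed convex with a minimizer w* of φ over C, and let 0 < γ ≤ 1/β. Then the projected gradient iterates w_{k+1} = P_C(w_k − γ∇φ(w_k)) satisfy φ(w_k) − φ(w*) ≤ ‖w_0 − w*‖² / (2γk) for all k ≥ 1. -/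
open RealInnerProductSpace

section Aux

variable {E : Type*} [NormedAddCommGroup E] [InnerProductSpace ℝ E] [CompleteSpace E]

lemma pgdLineDeriv (φ : E → ℝ) (gz x v : E) (t : ℝ)
    (hgz : HasGradientAt φ gz (x + t • v)) :
    HasDerivAt (fun s : ℝ => φ (x + s • v)) ⟪gz, v⟫ t := by
  have h1 : HasDerivAt (fun s : ℝ => x + s • v) v t := by
    simpa using ((hasDerivAt_id t).smul_const v).const_add x
  have h2 := (hasGradientAt_iff_hasFDerivAt.mp hgz).comp_hasDerivAt t h1
  simp only [InnerProductSpace.toDual_apply_apply] at h2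
  exact h2

lemma pgdFirstOrder (φ : E → ℝ) (hφ : ConvexOn ℝ Set.univ φ) (gx x : E)
    (hg : HasGradientAt φ gx x) (z : E) :
    φ x + ⟪gx, z - x⟫ ≤ φ z := by
  set ψ : ℝ → ℝ := fun s => φ (x + s • (z - x)) with hψdef
  have hψ : ConvexOn ℝ Set.univ ψ := by
    have h := hφ.comp_affineMap (AffineMap.lineMap x z)
    have : (φ ∘ (AffineMap.lineMap x z)) = ψ := by
      funext s
      simp [hψdef, AffineMap.lineMap_apply, add_comm]
    simpa [this] using h
  have hd : HasDerivAt ψ ⟪gx, z - x⟫ 0 := by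
    have := pgdLineDeriv φ gx x (z - x) 0 (by simpa using hg)
    simpa using this
  have := hψ.le_slope_of_hasDerivAt (Set.mem_univ (0:ℝ)) (Set.mem_univ (1:ℝ)) one_pos hd
  simp [slope_def_field, ψ] at this
  linarith

lemma pgdDescent (φ : E → ℝ) (g : E → E) (hg : ∀ x, HasGradientAt φ (g x) x)
    (β : ℝ) (hβ : 0 < β) (hLip : ∀ x y, ‖g x - g y‖ ≤ β * ‖x - y‖) (x y : E) :
    φ y ≤ φ x + ⟪g x, y - x⟫ + β / 2 * ‖y - x‖ ^ 2 := by
  set v : E := y - x with hv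
  set c : ℝ := ⟪g x, v⟫ with hc
  set F : ℝ → ℝ := fun t => φ (x + t • v) - t * c - (β / 2 * ‖v‖ ^ 2) * t ^ 2 with hF
  have hFd : ∀ t : ℝ, HasDerivAt F
      (⟪g (x + t • v), v⟫ - c - (β / 2 * ‖v‖ ^ 2) * (2 * t)) t := by
    intro t
    have h1 := pgdLineDeriv φ (g (x + t • v)) x v t (hg _)
    have h2 : HasDerivAt (fun s : ℝ => s * c) c t := by
      simpa using (hasDerivAt_id t).mul_const c
    have h3 : HasDerivAt (fun s : ℝ => (β / 2 * ‖v‖ ^ 2) * s ^ 2)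
        ((β / 2 * ‖v‖ ^ 2) * (2 * t)) t := by
      have := (hasDerivAt_pow 2 t).const_mul (β / 2 * ‖v‖ ^ 2)
      exact this.congr_deriv (by ring)
    exact (h1.sub h2).sub h3
  have hmono : AntitoneOn F (Set.Icc (0:ℝ) 1) := by
    apply antitoneOn_of_deriv_nonpos (convex_Icc 0 1)
    · exact fun t _ => ((hFd t).continuousAt).continuousWithinAt
    · exact fun t _ => ((hFd t).differentiableAt).differentiableWithinAt
    · intro t ht
      rw [interior_Icc] at ht
      rw [(hFd t).deriv]
      have h4 : ⟪g (x + t • v) - g x, v⟫ ≤ β * t * ‖v‖ ^ 2 := by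
        calc ⟪g (x + t • v) - g x, v⟫ ≤ ‖g (x + t • v) - g x‖ * ‖v‖ :=
              real_inner_le_norm _ _
          _ ≤ (β * ‖(x + t • v) - x‖) * ‖v‖ := by
              have hn : (0:ℝ) ≤ ‖v‖ := norm_nonneg _
              nlinarith [hLip (x + t • v) x]
          _ = β * t * ‖v‖ ^ 2 := by
              simp [norm_smul, abs_of_nonneg ht.1.le]; ring
      have h5 : ⟪g (x + t • v), v⟫ - c = ⟪g (x + t • v) - g x, v⟫ := by
        rw [inner_sub_left, hc]
      rw [sub_sub, ← sub_sub, h5]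
      nlinarith [h4]
  have hkey := hmono (Set.left_mem_Icc.2 zero_le_one) (Set.right_mem_Icc.2 zero_le_one)
    zero_le_one
  simp only [hF, zero_smul, add_zero, one_smul, zero_mul, one_pow, mul_one, zero_pow,
    sub_zero] at hkey
  have hxy : x + v = y := by rw [hv]; abel
  rw [hxy] at hkey
  linarith

lemma pgdStep (φ : E → ℝ) (hφ : ConvexOn ℝ Set.univ φ) (g : E → E)
    (hg : ∀ x, HasGradientAt φ (g x) x) (β : ℝ) (hβ : 0 < β)
    (hLip : ∀ x y, ‖g x - g y‖ ≤ β * ‖x - y‖) (γ : ℝ) (hγ0 : 0 < γ) (hβγ : β * γ ≤ 1)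
    (a p z : E) (hVI0 : ⟪(a - γ • g a) - p, z - p⟫ ≤ 0) :
    2 * γ * (φ p - φ z) ≤ ‖a - z‖ ^ 2 - ‖p - z‖ ^ 2 := by
  have h1 := pgdDescent φ g hg β hβ hLip a p
  have h2 := pgdFirstOrder φ hφ (g a) a (hg a) z
  have hG : ⟪g a, p - a⟫ - ⟪g a, z - a⟫ = -⟪g a, z - p⟫ := by
    rw [← inner_sub_right, ← inner_neg_right]
    congr 1
    abel
  have hVI : ⟪a - p, z - p⟫ - γ * ⟪g a, z - p⟫ ≤ 0 := by
    have he : (a - γ • g a) - p = (a - p) - γ • g a := by abel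
    rw [he, inner_sub_left, real_inner_smul_left] at hVI0
    linarith
  have hPol : ‖a - z‖ ^ 2 = ‖a - p‖ ^ 2 + 2 * ⟪a - p, p - z⟫ + ‖p - z‖ ^ 2 := by
    rw [show a - z = (a - p) + (p - z) by abel]
    exact norm_add_sq_real _ _
  have hIJ : ⟪a - p, z - p⟫ = -⟪a - p, p - z⟫ := by
    rw [← inner_neg_right]
    congr 1
    abel
  have hnorm : ‖p - a‖ = ‖a - p‖ := norm_sub_rev _ _
  have hb2 : β * γ * ‖a - p‖ ^ 2 ≤ 1 * ‖a - p‖ ^ 2 :=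
    mul_le_mul_of_nonneg_right hβγ (sq_nonneg _)
  rw [hnorm] at h1
  nlinarith [mul_le_mul_of_nonneg_left (sub_nonneg.2 h1)
      (le_of_lt (by positivity : (0:ℝ) < 2 * γ)),
    mul_le_mul_of_nonneg_left (sub_nonneg.2 h2)
      (le_of_lt (by positivity : (0:ℝ) < 2 * γ))]

end Aux

lemma pgdProjVI {n : ℕ} {C : Set (EuclideanSpace ℝ (Fin n))} (hCcv : Convex ℝ C)
    {x p : EuclideanSpace ℝ (Fin n)} (h : IsProjOn C x p) :
    ∀ q ∈ C, ⟪x - p, q - p⟫ ≤ 0 := by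
  haveI : Nonempty C := ⟨⟨p, h.1⟩⟩
  have hb : BddBelow (Set.range fun q : C => ‖x - (q : EuclideanSpace ℝ (Fin n))‖) :=
    ⟨0, by rintro r ⟨q, rfl⟩; exact norm_nonneg _⟩
  have hinf : ‖x - p‖ = ⨅ q : C, ‖x - q‖ :=
    le_antisymm (le_ciInf fun q => h.2 q q.2) (ciInf_le hb ⟨p, h.1⟩)
  exact (norm_eq_iInf_iff_real_inner_le_zero hCcv h.1).mp hinf

/-- `O(1/k)` rate of the exact projected gradient method: with step
`0 < γ ≤ 1/β`, the iterates `w_{k+1} = P_C(w_k − γ∇φ(w_k))` started in `C`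
satisfy `φ(w_k) − φ(w*) ≤ ‖w_0 − w*‖²/(2γk)` for every `k ≥ 1`. -/
theorem stmt11 (n : ℕ) (C : Set (EuclideanSpace ℝ (Fin n)))
    (hCne : C.Nonempty) (hCcl : IsClosed C) (hCcv : Convex ℝ C)
    (φ : EuclideanSpace ℝ (Fin n) → ℝ) (hφ : ConvexOn ℝ Set.univ φ)
    (g : EuclideanSpace ℝ (Fin n) → EuclideanSpace ℝ (Fin n))
    (hg : ∀ x, HasGradientAt φ (g x) x)
    (β : ℝ) (hβ : 0 < β) (hLip : ∀ x y, ‖g x - g y‖ ≤ β * ‖x - y‖)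
    (wstar : EuclideanSpace ℝ (Fin n)) (hws : wstar ∈ C)
    (hmin : ∀ u ∈ C, φ wstar ≤ φ u)
    (γ : ℝ) (hγ0 : 0 < γ) (hγ : γ ≤ 1 / β)
    (w : ℕ → EuclideanSpace ℝ (Fin n)) (hw0 : w 0 ∈ C)
    (hw : ∀ l, IsProjOn C (w l - γ • g (w l)) (w (l + 1))) :
    ∀ l : ℕ, 1 ≤ l → φ (w l) - φ wstar ≤ ‖w 0 - wstar‖ ^ 2 / (2 * γ * l) := by
  have hβγ : β * γ ≤ 1 := by
    rw [le_div_iff₀ hβ] at hγ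
    linarith
  have hmemC : ∀ l, w l ∈ C := by
    intro l
    cases l with
    | zero => exact hw0
    | succ m => exact (hw m).1
  have hstep : ∀ (l : ℕ), ∀ z ∈ C,
      2 * γ * (φ (w (l + 1)) - φ z) ≤ ‖w l - z‖ ^ 2 - ‖w (l + 1) - z‖ ^ 2 := by
    intro l z hz
    exact pgdStep φ hφ g hg β hβ hLip γ hγ0 hβγ (w l) (w (l + 1)) z
      (pgdProjVI hCcv (hw l) z hz)
  have hmono : ∀ l, φ (w (l + 1)) ≤ φ (w l) := by
    intro l
    have h := hstep l (w l) (hmemC l)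
    simp only [sub_self, norm_zero] at h
    nlinarith [sq_nonneg ‖w (l + 1) - w l‖]
  have hanti : ∀ j k : ℕ, j ≤ k → φ (w k) ≤ φ (w j) :=
    fun j k h => antitone_nat_of_succ_le (f := fun k => φ (w k)) hmono h
  have hsum : ∀ k : ℕ, ∑ j ∈ Finset.range k, (2 * γ * (φ (w (j + 1)) - φ wstar)) ≤
      ‖w 0 - wstar‖ ^ 2 - ‖w k - wstar‖ ^ 2 := by
    intro k
    induction k with
    | zero => simp
    | succ m ih =>
      rw [Finset.sum_range_succ]
      have := hstep m wstar hws
      linarith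
  intro l hl
  have hterm : ∀ j ∈ Finset.range l,
      2 * γ * (φ (w l) - φ wstar) ≤ 2 * γ * (φ (w (j + 1)) - φ wstar) := by
    intro j hj
    have hjl : j + 1 ≤ l := Finset.mem_range.mp hj
    have := hanti (j + 1) l hjl
    nlinarith
  have hcard := Finset.card_nsmul_le_sum (Finset.range l)
    (fun j => 2 * γ * (φ (w (j + 1)) - φ wstar)) (2 * γ * (φ (w l) - φ wstar)) hterm
  rw [Finset.card_range, nsmul_eq_mul] at hcard
  have hB : ∑ j ∈ Finset.range l, (2 * γ * (φ (w (j + 1)) - φ wstar)) ≤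
      ‖w 0 - wstar‖ ^ 2 := by
    have := hsum l
    nlinarith [sq_nonneg ‖w l - wstar‖]
  have hkey : (l : ℝ) * (2 * γ * (φ (w l) - φ wstar)) ≤ ‖w 0 - wstar‖ ^ 2 :=
    le_trans hcard hB
  have hlpos : (0:ℝ) < l := by exact_mod_cast hl
  rw [le_div_iff₀ (by positivity : (0:ℝ) < 2 * γ * l)]
  nlinarith
end

section
/- If φ : ℝ^n → ℝ is convex, differentiable, and ∇φ is β-Lipschitz, then ∇φ is (1/β)-cocoercive: ⟨∇φ(x) − ∇φ(y), x − y⟩ ≥ (1/β)‖∇φ(x) − ∇φ(y)‖² for all x, y ∈ ℝ^n. -/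
open Set

/-- Baillon–Haddad: the gradient of a convex differentiable function with
`β`-Lipschitz gradient is `(1/β)`-cocoercive. -/
theorem stmt18 (n : ℕ) (φ : EuclideanSpace ℝ (Fin n) → ℝ)
    (hφ : ConvexOn ℝ Set.univ φ)
    (g : EuclideanSpace ℝ (Fin n) → EuclideanSpace ℝ (Fin n))
    (hg : ∀ x, HasGradientAt φ (g x) x)
    (β : ℝ) (hβ : 0 < β) (hLip : ∀ x y, ‖g x - g y‖ ≤ β * ‖x - y‖) :
    ∀ x y, (1 / β) * ‖g x - g y‖ ^ 2 ≤ inner ℝ (g x - g y) (x - y) := by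
  -- derivative of φ along a line
  have hline : ∀ (a v : EuclideanSpace ℝ (Fin n)) (t : ℝ),
      HasDerivAt (fun t : ℝ => φ (a + t • v)) (inner ℝ (g (a + t • v)) v : ℝ) t := by
    intro a v t
    have h1 : HasDerivAt (fun t : ℝ => a + t • v) v t := by
      simpa using ((hasDerivAt_id t).smul_const v).const_add a
    have h2 := ((hg (a + t • v)).hasFDerivAt).comp_hasDerivAt t h1
    simpa only [Function.comp_def, InnerProductSpace.toDual_apply_apply] using h2
  -- Lemma A: first-order convexity inequality
  have hA : ∀ a b : EuclideanSpace ℝ (Fin n),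
      φ a + (inner ℝ (g a) (b - a) : ℝ) ≤ φ b := by
    intro a b
    set f : ℝ → ℝ := fun t => φ (a + t • (b - a)) with hf
    have hconv : ConvexOn ℝ univ f := by
      have := hφ.comp_affineMap (AffineMap.lineMap a b : ℝ →ᵃ[ℝ] EuclideanSpace ℝ (Fin n))
      have he : f = φ ∘ (AffineMap.lineMap a b : ℝ →ᵃ[ℝ] EuclideanSpace ℝ (Fin n)) := by
        funext t
        simp [hf, AffineMap.lineMap_apply, add_comm]
      rw [he]
      simpa using this
    have hd : HasDerivAt f (inner ℝ (g a) (b - a) : ℝ) 0 := by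
      have := hline a (b - a) 0
      simpa using this
    have hs := hconv.le_slope_of_hasDerivAt (mem_univ (0:ℝ)) (mem_univ (1:ℝ))
      one_pos hd
    have h01 : (inner ℝ (g a) (b - a) : ℝ) ≤ f 1 - f 0 := by
      simpa [slope_def_field] using hs
    have hf0 : f 0 = φ a := by simp [hf]
    have hf1 : f 1 = φ b := by simp [hf]
    rw [hf0, hf1] at h01
    linarith
  -- Lemma B: descent lemma
  have hB : ∀ a v : EuclideanSpace ℝ (Fin n),
      φ (a + v) ≤ φ a + (inner ℝ (g a) v : ℝ) + β / 2 * ‖v‖ ^ 2 := by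
    intro a v
    set C : ℝ := β * ‖v‖ ^ 2 with hC
    set F : ℝ → ℝ := fun t =>
      φ a + (inner ℝ (g a) v : ℝ) * t + C * t ^ 2 / 2 - φ (a + t • v) with hF
    have hFd : ∀ t : ℝ, HasDerivAt F
        ((inner ℝ (g a) v : ℝ) + C * t - (inner ℝ (g (a + t • v)) v : ℝ)) t := by
      intro t
      have h1 : HasDerivAt (fun t : ℝ =>
          φ a + (inner ℝ (g a) v : ℝ) * t + C * t ^ 2 / 2)
          ((inner ℝ (g a) v : ℝ) + C * t) t := by
        have := (((hasDerivAt_id t).const_mul (inner ℝ (g a) v : ℝ)).const_add (φ a)).add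
          (((hasDerivAt_pow 2 t).const_mul C).div_const 2)
        refine this.congr_deriv ?_
        norm_num
        ring
      exact h1.sub (hline a v t)
    have hmono : MonotoneOn F (Icc 0 1) := by
      apply monotoneOn_of_deriv_nonneg (convex_Icc 0 1)
      · exact fun t _ => ((hFd t).differentiableAt).continuousAt.continuousWithinAt
      · exact fun t _ => ((hFd t).differentiableAt).differentiableWithinAt
      · intro t ht
        rw [interior_Icc] at ht
        rw [(hFd t).deriv]
        have h1 : (inner ℝ (g (a + t • v)) v : ℝ) - (inner ℝ (g a) v : ℝ)
            = (inner ℝ (g (a + t • v) - g a) v : ℝ) := by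
          rw [inner_sub_left]
        have hcs : (inner ℝ (g (a + t • v)) v : ℝ) - (inner ℝ (g a) v : ℝ) ≤ C * t := by
          rw [h1]
          calc (inner ℝ (g (a + t • v) - g a) v : ℝ)
              ≤ ‖g (a + t • v) - g a‖ * ‖v‖ := real_inner_le_norm _ _
            _ ≤ (β * ‖(a + t • v) - a‖) * ‖v‖ :=
                mul_le_mul_of_nonneg_right (hLip (a + t • v) a) (norm_nonneg v)
            _ = C * t := by
                have hnn : ‖(a + t • v) - a‖ = t * ‖v‖ := by
                  rw [add_sub_cancel_left, norm_smul, Real.norm_eq_abs,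
                    abs_of_pos ht.1]
                rw [hnn, hC]; ring
        linarith
    have h01 := hmono (left_mem_Icc.mpr zero_le_one) (right_mem_Icc.mpr zero_le_one)
      zero_le_one
    have hF0 : F 0 = φ a + 0 + 0 - φ a := by simp [hF]
    have hF1 : F 1 = φ a + (inner ℝ (g a) v : ℝ) + C / 2 - φ (a + v) := by
      simp [hF]
    rw [hF0, hF1] at h01
    rw [hC] at h01
    linarith
  -- Key inequality
  have hK : ∀ x y : EuclideanSpace ℝ (Fin n),
      φ x + (inner ℝ (g x) (y - x) : ℝ) + 1 / (2 * β) * ‖g y - g x‖ ^ 2 ≤ φ y := by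
    intro x y
    set u : EuclideanSpace ℝ (Fin n) := g y - g x with hu
    have h1 := hA x (y - β⁻¹ • u)
    have h2 := hB y (-(β⁻¹ • u))
    have he : y + -(β⁻¹ • u) = y - β⁻¹ • u := by abel
    rw [he] at h2
    have e1 : (inner ℝ (g x) ((y - β⁻¹ • u) - x) : ℝ)
        = (inner ℝ (g x) (y - x) : ℝ) - β⁻¹ * (inner ℝ (g x) u : ℝ) := by
      rw [show (y - β⁻¹ • u) - x = (y - x) - β⁻¹ • u by abel, inner_sub_right,
        real_inner_smul_right]
    have e2 : (inner ℝ (g y) (-(β⁻¹ • u)) : ℝ) = -(β⁻¹ * (inner ℝ (g y) u : ℝ)) := by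
      rw [inner_neg_right, real_inner_smul_right]
    have e3 : ‖-(β⁻¹ • u)‖ ^ 2 = β⁻¹ ^ 2 * ‖u‖ ^ 2 := by
      rw [norm_neg, norm_smul, Real.norm_eq_abs, abs_of_pos (inv_pos.mpr hβ)]
      ring
    have e4 : (inner ℝ (g y) u : ℝ) - (inner ℝ (g x) u : ℝ) = ‖u‖ ^ 2 := by
      rw [← inner_sub_left, ← hu, real_inner_self_eq_norm_sq]
    rw [e1] at h1
    rw [e2, e3] at h2
    have e4' : β⁻¹ * (inner ℝ (g y) u : ℝ) - β⁻¹ * (inner ℝ (g x) u : ℝ)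
        = β⁻¹ * ‖u‖ ^ 2 := by rw [← mul_sub, e4]
    have hhalf : β / 2 * (β⁻¹ ^ 2 * ‖u‖ ^ 2) = 1 / (2 * β) * ‖u‖ ^ 2 := by
      field_simp
    have hinv2 : β⁻¹ * ‖u‖ ^ 2 = 2 * (1 / (2 * β)) * ‖u‖ ^ 2 := by
      field_simp
    linarith
  -- Combine
  intro x y
  have k1 := hK x y
  have k2 := hK y x
  have e5 : ‖g y - g x‖ = ‖g x - g y‖ := norm_sub_rev _ _
  have e6 : (inner ℝ (g x) (y - x) : ℝ) + (inner ℝ (g y) (x - y) : ℝ)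
      = -(inner ℝ (g x - g y) (x - y) : ℝ) := by
    rw [inner_sub_left]
    have h7 : (inner ℝ (g x) (y - x) : ℝ) = -(inner ℝ (g x) (x - y) : ℝ) := by
      rw [← inner_neg_right]; congr 1; abel
    rw [h7]; ring
  rw [e5] at k1
  have h2β : 1 / (2 * β) * ‖g x - g y‖ ^ 2 + 1 / (2 * β) * ‖g x - g y‖ ^ 2
      = 1 / β * ‖g x - g y‖ ^ 2 := by
    field_simp
    ring
  linarith
end
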